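/- Deviation identity between a linear continuous first-order diffusion process and any discrete (rounded) version of it (Lemma 3). Let n ≥ 1 and let C : (Fin n → ℝ) →ₗ[ℝ] Matrix (Fin n) (Fin n) ℝ be a linear map assigning to each load vector a flow matrix, with antisymmetric values: (C x) i j = −(C x) j i for all x, i, j. Define the continuous one-round update F : (Fin n → ℝ) → (Fin n → ℝ) by (F x) i = x i − Σ_j (C x) i j. Let x₀ be any load vector and let e : ℕ → Matrix (Fin n) (Fin n) ℝ be any family of rounding-error matrices with (e s) i j = −(e s) j i for all s, i, j. Define trajectories xC(0) = xD(0) = x₀, xC(t+1) = F(xC(t)), and xD(t+1) i = (F (xD t)) i + Σ_j (e t) i j. Then for every node k and every round t: xD(t) k − xC(t) k = Σ_{s=0}^{t−1} Σ_{i<j} (e s) i j · ((F^[t−1−s] (δᵢ − δⱼ)) k), where δᵢ is the standard basis vector with 1 in coordinate i and F^[r] is the r-fold iterate of F. -/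

import Mathlib

/-- Deviation identity between a linear continuous first-order diffusion process and any
discrete (rounded) version of it (Lemma 3). -/
theorem deviation_identity_linear_FOS
    (n : ℕ) (hn : 1 ≤ n)
    (C : (Fin n → ℝ) →ₗ[ℝ] Matrix (Fin n) (Fin n) ℝ)
    (hC : ∀ (x : Fin n → ℝ) (i j : Fin n), C x i j = -(C x j i))
    (F : (Fin n → ℝ) → (Fin n → ℝ))
    (hF : ∀ (x : Fin n → ℝ) (i : Fin n), F x i = x i - ∑ j, C x i j)
    (x₀ : Fin n → ℝ)
    (e : ℕ → Matrix (Fin n) (Fin n) ℝ)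
    (he : ∀ (s : ℕ) (i j : Fin n), e s i j = -(e s j i))
    (xC xD : ℕ → Fin n → ℝ)
    (hxC0 : xC 0 = x₀) (hxD0 : xD 0 = x₀)
    (hxC : ∀ t, xC (t + 1) = F (xC t))
    (hxD : ∀ t i, xD (t + 1) i = F (xD t) i + ∑ j, e t i j)
    (k : Fin n) (t : ℕ) :
    xD t k - xC t k =
      ∑ s ∈ Finset.range t, ∑ i : Fin n, ∑ j : Fin n,
        if i < j then
          e s i j * (F^[t - 1 - s] (Pi.single i 1 - Pi.single j 1)) k
        else 0 := by
  set G : Module.End ℝ (Fin n → ℝ) :=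
    { toFun := fun x i => x i - ∑ j, C x i j
      map_add' := by
        intro a b; funext i
        simp [map_add, Finset.sum_add_distrib]; ring
      map_smul' := by
        intro c a; funext i
        simp [map_smul]; rw [mul_sub, Finset.mul_sum] } with hGdef
  have hFG : F = ⇑G := by funext x i; rw [hF]; rfl
  have hE0 : ∀ s (i : Fin n), e s i i = 0 := fun s i => by
    have := he s i i; linarith
  set E : ℕ → (Fin n → ℝ) := fun s k => ∑ j, e s k j with hEdef
  have keyA : ∀ s, E s = ∑ i, ∑ j,
      if i < j then e s i j • (Pi.single i 1 - Pi.single j 1 : Fin n → ℝ) else 0 := by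
    intro s; funext m
    have : (∑ i, ∑ j, if i < j then e s i j •
        (Pi.single i 1 - Pi.single j 1 : Fin n → ℝ) else 0) m
        = ∑ i, ∑ j, ((if i < j then e s i j * (if m = i then (1:ℝ) else 0) else 0)
            - (if i < j then e s i j * (if m = j then (1:ℝ) else 0) else 0)) := by
      rw [Finset.sum_apply]
      refine Finset.sum_congr rfl fun i _ => ?_
      rw [Finset.sum_apply]
      refine Finset.sum_congr rfl fun j _ => ?_
      by_cases h : i < j <;> simp [h, Pi.single_apply, mul_sub]
    rw [this]
    simp only [Finset.sum_sub_distrib]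
    have h1 : (∑ i : Fin n, ∑ j : Fin n, if i < j then e s i j * (if m = i then (1:ℝ) else 0) else 0)
        = ∑ j : Fin n, if m < j then e s m j else 0 := by
      rw [Finset.sum_comm]
      refine Finset.sum_congr rfl fun j _ => ?_
      rw [Finset.sum_eq_single m]
      · by_cases h : m < j <;> simp [h]
      · intro i _ hi
        by_cases h : i < j <;> simp [h, Ne.symm hi]
      · simp
    have h2 : (∑ i : Fin n, ∑ j : Fin n, if i < j then e s i j * (if m = j then (1:ℝ) else 0) else 0)
        = ∑ i : Fin n, if i < m then e s i m else 0 := by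
      refine Finset.sum_congr rfl fun i _ => ?_
      rw [Finset.sum_eq_single m]
      · by_cases h : i < m <;> simp [h]
      · intro j _ hj
        by_cases h : i < j <;> simp [h, Ne.symm hj]
      · simp
    rw [h1, h2]
    have hsplit : ∀ j : Fin n, e s m j =
        (if m < j then e s m j else 0) - (if j < m then e s j m else 0) := by
      intro j
      rcases lt_trichotomy m j with h | h | h
      · simp [h, not_lt_of_gt h]
      · subst h; simp [hE0]
      · simp [h, not_lt_of_gt h, he s m j]
    calc E s m = ∑ j, ((if m < j then e s m j else 0) - (if j < m then e s j m else 0)) :=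
          Finset.sum_congr rfl fun j _ => hsplit j
      _ = _ := Finset.sum_sub_distrib _ _
  have keyB : ∀ t, xD t - xC t = ∑ s ∈ Finset.range t, (G ^ (t - 1 - s)) (E s) := by
    intro t
    induction t with
    | zero => simp [hxC0, hxD0]
    | succ t ih =>
      have step : xD (t + 1) - xC (t + 1) = G (xD t - xC t) + E t := by
        funext i
        have : G (xD t - xC t) i = F (xD t) i - F (xC t) i := by
          rw [map_sub, hFG]; rfl
        simp only [Pi.sub_apply, Pi.add_apply, hxD, hxC, this, hEdef]
        ring
      rw [step, ih, map_sum, Finset.sum_range_succ]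
      congr 1
      · refine Finset.sum_congr rfl fun s hs => ?_
        have hs' : s < t := Finset.mem_range.mp hs
        rw [← Module.End.mul_apply, ← pow_succ']
        congr 2
        omega
      · have : t + 1 - 1 - t = 0 := by omega
        rw [this, pow_zero]; rfl
  have hk := congrFun (keyB t) k
  rw [Pi.sub_apply] at hk
  rw [hk, Finset.sum_apply]
  refine Finset.sum_congr rfl fun s hs => ?_
  rw [keyA s, map_sum, Finset.sum_apply]
  refine Finset.sum_congr rfl fun i _ => ?_
  rw [map_sum, Finset.sum_apply]
  refine Finset.sum_congr rfl fun j _ => ?_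
  by_cases h : i < j
  · simp only [h, if_true, map_smul, Pi.smul_apply, smul_eq_mul, hFG]
    rw [Module.End.pow_apply]
  · simp [h]
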